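/- Let H be a real Hilbert space, Y an H-valued random element, and τ ∈ H with ‖τ‖ < 1. Suppose there exists an integer m > √2/(√2 − √(1+‖τ‖)) and M > 0 with P(‖Y‖ > M/m) < 1/m. Then for every Q with ‖Q‖ > M, g(Q) = E[‖Q−Y‖ − ‖Y‖] − ⟨τ, Q⟩ > g(0) = 0. In particular, any minimizer Q of g satisfies ‖Q‖ ≤ M. -/

import Mathlib

open MeasureTheory
open scoped RealInnerProductSpace

private lemma pos_of_sq_mul_pos' {a x : ℝ} (h : 0 < a^2 * x) : 0 < x := by
  by_contra h'
  push_neg at h'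
  nlinarith [sq_nonneg a]

private lemma key_ineq' (m M N t p q : ℝ) (hm4 : 4 ≤ m)
    (hkey : m^2*(1+t) < 2*(m-1)^2) (ht : 0 ≤ t) (hM : 0 < M) (hN : M < N)
    (hp0 : 0 ≤ p) (hpm : p * m < 1) (hq : m * q = M) :
    0 < (1-p)*(N-2*q) + p*(-N) - t*N := by
  have hm0 : (0:ℝ) < m := by linarith
  have htm : t*m^2 < m^2 - 4*m + 2 := by nlinarith [hkey]
  have hpml : p*m*(m-1) < m - 1 := by nlinarith [hpm, hm0]
  have h2 : 0 < m^2*(1-2*p-t) := by nlinarith [mul_lt_mul_of_pos_right hpm hm0, htm]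
  have hcoeff : 0 < 1-2*p-t := pos_of_sq_mul_pos' h2
  have hpos : 0 < m^2 - t*m^2 - 2*m - 2*(p*m*(m-1)) := by nlinarith [htm, hpml]
  have h5 : m^2 * (M*(1-2*p-t) - 2*q*(1-p)) = M * (m^2 - t*m^2 - 2*m - 2*(p*m*(m-1))) := by
    linear_combination (-2*m*(1-p)) * hq
  have h6 : 0 < m^2 * (M*(1-2*p-t) - 2*q*(1-p)) := by
    rw [h5]; exact mul_pos hM hpos
  have h4 : 0 < M*(1-2*p-t) - 2*q*(1-p) := pos_of_sq_mul_pos' h6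
  nlinarith [mul_lt_mul_of_pos_right hN hcoeff, h4]

/-- If `m > √2/(√2 − √(1+‖τ‖))` and `P(‖Y‖ > M/m) < 1/m`, then `g(Q) > g(0) = 0`
whenever `‖Q‖ > M`; in particular any minimizer of g has norm at most M. -/
theorem spatial_quantile_minimizer_bounded
    {H : Type*} [NormedAddCommGroup H] [InnerProductSpace ℝ H] [CompleteSpace H]
    [SecondCountableTopology H]
    {Ω : Type*} [MeasurableSpace Ω] (μ : Measure Ω) [IsProbabilityMeasure μ]
    (Y : Ω → H) (hY : AEStronglyMeasurable Y μ) (τ : H) (hτ : ‖τ‖ < 1)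
    (m : ℕ) (M : ℝ) (hM : 0 < M)
    (hm : (m : ℝ) > Real.sqrt 2 / (Real.sqrt 2 - Real.sqrt (1 + ‖τ‖)))
    (hP : (μ {ω | ‖Y ω‖ > M / m}).toReal < 1 / m) :
    ((∫ ω, (‖(0 : H) - Y ω‖ - ‖Y ω‖) ∂μ) - ⟪τ, (0 : H)⟫ = 0) ∧
    (∀ Q : H, ‖Q‖ > M →
        (∫ ω, (‖Q - Y ω‖ - ‖Y ω‖) ∂μ) - ⟪τ, Q⟫ > 0) ∧
    (∀ Q : H,
        IsMinOn (fun Q : H => (∫ ω, (‖Q - Y ω‖ - ‖Y ω‖) ∂μ) - ⟪τ, Q⟫) Set.univ Q →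
        ‖Q‖ ≤ M) := by
  have ht0 : (0:ℝ) ≤ ‖τ‖ := norm_nonneg τ
  have h1t : (0:ℝ) ≤ 1 + ‖τ‖ := by linarith
  have hs : Real.sqrt (1 + ‖τ‖) < Real.sqrt 2 := Real.sqrt_lt_sqrt h1t (by linarith)
  have hd : 0 < Real.sqrt 2 - Real.sqrt (1 + ‖τ‖) := by linarith
  have hm' : Real.sqrt 2 < (m:ℝ) * (Real.sqrt 2 - Real.sqrt (1 + ‖τ‖)) := by
    rw [gt_iff_lt, div_lt_iff₀ hd] at hm; exact hm
  have hs1 : (1:ℝ) ≤ Real.sqrt (1 + ‖τ‖) := by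
    nlinarith [Real.sq_sqrt h1t, Real.sqrt_nonneg (1 + ‖τ‖)]
  have hs2 : (0:ℝ) < Real.sqrt 2 := Real.sqrt_pos.2 (by norm_num)
  have hm1 : (1:ℝ) < m := by nlinarith [hm', hd, hs1, hs2]
  have hm0 : (0:ℝ) < m := by linarith
  have ha : (m:ℝ) * Real.sqrt (1+‖τ‖) < Real.sqrt 2 * ((m:ℝ)-1) := by nlinarith [hm']
  have hb := mul_self_lt_mul_self (mul_nonneg hm0.le (Real.sqrt_nonneg _)) ha
  have hb2 : ((m:ℝ)*Real.sqrt (1+‖τ‖))^2 < (Real.sqrt 2*((m:ℝ)-1))^2 := by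
    rw [sq, sq]; exact hb
  have hkey : (m:ℝ)^2*(1+‖τ‖) < 2*((m:ℝ)-1)^2 := by
    have e1 : ((m:ℝ)*Real.sqrt (1+‖τ‖))^2 = (m:ℝ)^2 * (1+‖τ‖) := by
      rw [mul_pow, Real.sq_sqrt h1t]
    have e2 : (Real.sqrt 2*((m:ℝ)-1))^2 = 2*((m:ℝ)-1)^2 := by
      rw [mul_pow, Real.sq_sqrt (by norm_num : (0:ℝ) ≤ 2)]
    rw [e1, e2] at hb2; exact hb2
  have hm2 : 1 < m := by exact_mod_cast hm1
  have hm4n : 4 ≤ m := by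
    by_contra h
    push_neg at h
    interval_cases m <;> norm_num at hkey <;> linarith [ht0]
  have hm4 : (4:ℝ) ≤ m := by exact_mod_cast hm4n
  have hzero : (∫ ω, (‖(0 : H) - Y ω‖ - ‖Y ω‖) ∂μ) - ⟪τ, (0 : H)⟫ = 0 := by simp
  have hmain : ∀ Q : H, ‖Q‖ > M →
      (∫ ω, (‖Q - Y ω‖ - ‖Y ω‖) ∂μ) - ⟪τ, Q⟫ > 0 := by
    intro Q hQ
    set Y' := hY.mk Y with hY'def
    have hY'm : StronglyMeasurable Y' := hY.stronglyMeasurable_mk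
    have hae : Y =ᵐ[μ] Y' := hY.ae_eq_mk
    set c : ℝ := M / m with hc
    have hcq : (m:ℝ) * c = M := by rw [hc]; field_simp [hm0.ne']
    set A : Set Ω := {ω | ‖Y' ω‖ ≤ c} with hAdef
    have hA : MeasurableSet A := by
      have hmeas : Measurable fun ω => ‖Y' ω‖ := hY'm.norm.measurable
      exact hmeas measurableSet_Iic
    set p : ℝ := (μ Aᶜ).toReal with hpdef
    have hp0 : 0 ≤ p := ENNReal.toReal_nonneg
    have hAc : μ Aᶜ = μ {ω | ‖Y ω‖ > M / m} := by
      apply measure_congr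
      apply Filter.eventuallyEq_set.2
      filter_upwards [hae] with ω hω
      simp [hAdef, Set.mem_setOf_eq, hω, not_le, hc]
    have hpm : p * m < 1 := by
      have h1 : p < 1 / m := by rw [hpdef, hAc]; exact hP
      calc p * m < (1/m) * m := mul_lt_mul_of_pos_right h1 hm0
        _ = 1 := by field_simp
    have hsum : (μ A).toReal + p = 1 := by
      rw [hpdef, ← ENNReal.toReal_add (measure_ne_top _ _) (measure_ne_top _ _),
        measure_add_measure_compl hA, measure_univ, ENNReal.toReal_one]
    have hfmeas : AEStronglyMeasurable (fun ω => ‖Q - Y ω‖ - ‖Y ω‖) μ :=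
      ((aestronglyMeasurable_const.sub hY).norm).sub hY.norm
    have hfbd : ∀ ω, |‖Q - Y ω‖ - ‖Y ω‖| ≤ ‖Q‖ := by
      intro ω
      have h := abs_norm_sub_norm_le (Q - Y ω) (-(Y ω))
      simpa [sub_neg_eq_add, sub_add_cancel] using h
    have hint : Integrable (fun ω => ‖Q - Y ω‖ - ‖Y ω‖) μ := by
      refine Integrable.mono' (integrable_const ‖Q‖) hfmeas ?_
      filter_upwards with ω
      simpa [Real.norm_eq_abs] using hfbd ω
    set g : Ω → ℝ := fun ω => A.indicator (fun _ => ‖Q‖ - 2*c) ω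
        + Aᶜ.indicator (fun _ => -‖Q‖) ω with hgdef
    have hgint : Integrable g μ :=
      ((integrable_const _).indicator hA).add ((integrable_const _).indicator hA.compl)
    have hgle : g ≤ᵐ[μ] fun ω => ‖Q - Y ω‖ - ‖Y ω‖ := by
      filter_upwards [hae] with ω hω
      by_cases hωA : ω ∈ A
      · have h1 : ‖Y ω‖ ≤ c := by rw [hω]; exact hωA
        have h2 : ‖Q‖ - ‖Y ω‖ ≤ ‖Q - Y ω‖ := norm_sub_norm_le Q (Y ω)
        have hnot : ω ∉ Aᶜ := by simpa using hωA
        simp only [hgdef, Set.indicator_of_mem hωA, Set.indicator_of_notMem hnot]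
        simp only [add_zero]
        linarith
      · have h2 : ‖Y ω‖ ≤ ‖Q‖ + ‖Q - Y ω‖ := by
          have h3 := norm_sub_le Q (Q - Y ω)
          simpa [sub_sub_cancel] using h3
        simp only [hgdef, Set.indicator_of_notMem hωA,
          Set.indicator_of_mem (Set.mem_compl hωA)]
        simp only [zero_add]
        linarith
    have hgval : ∫ ω, g ω ∂μ = (μ A).toReal * (‖Q‖ - 2*c) + p * (-‖Q‖) := by
      rw [hgdef]
      rw [integral_add ((integrable_const _).indicator hA)
        ((integrable_const _).indicator hA.compl)]
      rw [integral_indicator_const _ hA, integral_indicator_const _ hA.compl]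
      simp [smul_eq_mul, hpdef, measureReal_def]
    have hge : (1-p) * (‖Q‖ - 2*c) + p * (-‖Q‖) ≤ ∫ ω, (‖Q - Y ω‖ - ‖Y ω‖) ∂μ := by
      have hmono := integral_mono_ae hgint hint hgle
      rw [hgval] at hmono
      have hA1 : (μ A).toReal = 1 - p := by linarith
      rw [hA1] at hmono
      exact hmono
    have hinner : ⟪τ, Q⟫ ≤ ‖τ‖ * ‖Q‖ := real_inner_le_norm τ Q
    have hkey2 := key_ineq' m M ‖Q‖ ‖τ‖ p c hm4 hkey ht0 hM hQ hp0 hpm hcq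
    linarith
  refine ⟨hzero, hmain, ?_⟩
  intro Q hminQ
  by_contra hcon
  push_neg at hcon
  have h1 := hmain Q hcon
  have h2 := isMinOn_iff.1 hminQ 0 (Set.mem_univ 0)
  rw [hzero] at h2
  linarith
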